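/- arXiv:1709.02144 — 10 statements merged into one kernel-verified Lean document; each statement's English description precedes it below -/
import Mathlib

section
/- Let k, l, m, n be integers. Set A = 2k² + 2l², B = 8 + 4km + 4ln, C = 2m² + 2n², and let h = gcd(A, B, C). Then every odd prime p dividing h satisfies p ≡ 1 (mod 4). -/
/-- Lemma 3.6 (first part): every odd prime dividing h = gcd(A,B,C) is ≡ 1 (mod 4),
where A = 2k²+2l², B = 8+4km+4ln, C = 2m²+2n². -/
theorem stmt_0 (k l m n : ℤ)
    (A B C : ℤ) (hA : A = 2*k^2 + 2*l^2) (hB : B = 8 + 4*k*m + 4*l*n)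
    (hC : C = 2*m^2 + 2*n^2)
    (h : ℕ) (hh : (h : ℤ) = Int.gcd A (Int.gcd B C)) :
    ∀ p : ℕ, p.Prime → Odd p → p ∣ h → p % 4 = 1 := by
  intro p pp podd pdvd
  haveI := Fact.mk pp
  have hph : (p : ℤ) ∣ (h : ℤ) := Int.natCast_dvd_natCast.mpr pdvd
  have hgA : (h : ℤ) ∣ A := hh ▸ Int.gcd_dvd_left _ _
  have hgBC : (h : ℤ) ∣ (Int.gcd B C : ℤ) := hh ▸ Int.gcd_dvd_right _ _
  have hgB : (h : ℤ) ∣ B := hgBC.trans (Int.gcd_dvd_left _ _)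
  have hgC : (h : ℤ) ∣ C := hgBC.trans (Int.gcd_dvd_right _ _)
  have hpA : (p : ℤ) ∣ A := hph.trans hgA
  have hpB : (p : ℤ) ∣ B := hph.trans hgB
  have hpC : (p : ℤ) ∣ C := hph.trans hgC
  have eA : (A : ZMod p) = 0 := (ZMod.intCast_zmod_eq_zero_iff_dvd _ _).mpr hpA
  have eB : (B : ZMod p) = 0 := (ZMod.intCast_zmod_eq_zero_iff_dvd _ _).mpr hpB
  have eC : (C : ZMod p) = 0 := (ZMod.intCast_zmod_eq_zero_iff_dvd _ _).mpr hpC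
  rw [hA] at eA; rw [hB] at eB; rw [hC] at eC
  push_cast at eA eB eC
  have hp2 : p ≠ 2 := by
    rintro rfl; exact (Nat.not_odd_iff_even.mpr (by norm_num)) podd
  have h2 : (2 : ZMod p) ≠ 0 := by
    intro hz
    have : p ∣ 2 := by
      have := (ZMod.natCast_eq_zero_iff 2 p).mp (by exact_mod_cast hz)
      exact this
    have := (Nat.prime_dvd_prime_iff_eq pp Nat.prime_two).mp this
    exact hp2 this
  have e1 : (k : ZMod p)^2 + (l : ZMod p)^2 = 0 := by
    have := mul_ne_zero h2 h2
    apply mul_left_cancel₀ h2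
    linear_combination eA
  have e2 : (m : ZMod p)^2 + (n : ZMod p)^2 = 0 := by
    apply mul_left_cancel₀ h2
    linear_combination eC
  have e3 : (2 : ZMod p) + (k : ZMod p) * m + (l : ZMod p) * n = 0 := by
    apply mul_left_cancel₀ (mul_ne_zero h2 h2)
    linear_combination eB
  suffices hsq : IsSquare (-1 : ZMod p) by
    have h3 : p % 4 ≠ 3 := (ZMod.exists_sq_eq_neg_one_iff).mp hsq
    have h1 : p % 2 = 1 := Nat.odd_iff.mp podd
    omega
  by_cases hk : (k : ZMod p) = 0
  · have hl : (l : ZMod p) = 0 := by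
      have : (l : ZMod p)^2 = 0 := by rw [hk] at e1; linear_combination e1
      exact pow_eq_zero_iff (two_ne_zero) |>.mp this
    by_cases hm : (m : ZMod p) = 0
    · have hn : (n : ZMod p) = 0 := by
        have : (n : ZMod p)^2 = 0 := by rw [hm] at e2; linear_combination e2
        exact pow_eq_zero_iff (two_ne_zero) |>.mp this
      exfalso
      apply h2
      rw [hk, hl] at e3; simpa using e3
    · refine ⟨(n : ZMod p) * (m : ZMod p)⁻¹, ?_⟩
      field_simp
      linear_combination -e2
  · refine ⟨(l : ZMod p) * (k : ZMod p)⁻¹, ?_⟩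
    field_simp
    linear_combination -e1
end

section
/- Let k, l, m, n be integers. Set A = 2k² + 2l², B = 8 + 4km + 4ln, C = 2m² + 2n², and let h = gcd(A, B, C). Then the integers a = A/h and c = C/h satisfy a ≢ 3 (mod 4) and c ≢ 3 (mod 4). -/
/-- If `p ≡ 3 mod 4` is prime and divides `x² + y²`, it divides both `x` and `y`. -/
lemma dvd_of_dvd_sq_add_sq (p : ℕ) (hp : p.Prime) (hp3 : p % 4 = 3) (x y : ℤ)
    (hd : (p : ℤ) ∣ x ^ 2 + y ^ 2) : (p : ℤ) ∣ x ∧ (p : ℤ) ∣ y := by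
  haveI : Fact p.Prime := ⟨hp⟩
  have hzero : ((x : ZMod p) ^ 2 + (y : ZMod p) ^ 2) = 0 := by
    have := (ZMod.intCast_zmod_eq_zero_iff_dvd (x ^ 2 + y ^ 2) p).mpr hd
    push_cast at this
    exact this
  have hy : (y : ZMod p) = 0 := by
    by_contra hy
    have hy2 : ((y : ZMod p)) ^ 2 ≠ 0 := pow_ne_zero _ hy
    have hx2 : (x : ZMod p) ^ 2 = -(y : ZMod p) ^ 2 :=
      eq_neg_of_add_eq_zero_left hzero
    have hsq : ((x : ZMod p) * (y : ZMod p)⁻¹) * ((x : ZMod p) * (y : ZMod p)⁻¹) = -1 := by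
      have : ((x : ZMod p) * (y : ZMod p)⁻¹) * ((x : ZMod p) * (y : ZMod p)⁻¹)
          = (x : ZMod p) ^ 2 * ((y : ZMod p) ^ 2)⁻¹ := by
        rw [pow_two, pow_two, mul_inv]; ring
      rw [this, hx2, neg_mul, mul_inv_cancel₀ hy2]
    have : IsSquare (-1 : ZMod p) := ⟨_, hsq.symm⟩
    exact (ZMod.exists_sq_eq_neg_one_iff.mp this) hp3
  have hx : (x : ZMod p) = 0 := by
    have h2 : (x : ZMod p) ^ 2 = 0 := by rw [hy] at hzero; simpa using hzero
    exact pow_eq_zero_iff (n := 2) (by norm_num) |>.mp h2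
  exact ⟨(ZMod.intCast_zmod_eq_zero_iff_dvd x p).mp hx,
    (ZMod.intCast_zmod_eq_zero_iff_dvd y p).mp hy⟩

/-- The `p`-adic valuation of `x² + y²` is even for `p ≡ 3 mod 4`. -/
lemma even_padicValNat_sq_add_sq (p : ℕ) (hp : p.Prime) (hp3 : p % 4 = 3) :
    ∀ N : ℕ, ∀ x y : ℤ, (x ^ 2 + y ^ 2).natAbs = N → Even (padicValNat p N) := by
  haveI : Fact p.Prime := ⟨hp⟩
  intro N
  induction N using Nat.strong_induction_on with
  | _ N ih =>
    intro x y hN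
    rcases eq_or_ne N 0 with rfl | hN0
    · simp
    by_cases hdvd : p ∣ N
    · have hpos : (0:ℤ) ≤ x ^ 2 + y ^ 2 := by positivity
      have hA : x ^ 2 + y ^ 2 = (N : ℤ) := by
        rw [← hN, Int.natAbs_of_nonneg hpos]
      have hd : (p : ℤ) ∣ x ^ 2 + y ^ 2 := hA ▸ Int.natCast_dvd_natCast.mpr hdvd
      obtain ⟨hx, hy⟩ := dvd_of_dvd_sq_add_sq p hp hp3 x y hd
      obtain ⟨x', rfl⟩ := hx
      obtain ⟨y', rfl⟩ := hy
      set M : ℕ := (x' ^ 2 + y' ^ 2).natAbs with hM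
      have hfact : ((p : ℤ) * x') ^ 2 + ((p : ℤ) * y') ^ 2
          = (p : ℤ) ^ 2 * (x' ^ 2 + y' ^ 2) := by ring
      have hNM : N = p ^ 2 * M := by
        have := congrArg Int.natAbs hfact
        rw [hN] at this
        simpa [Int.natAbs_mul, Int.natAbs_pow] using this
      have hM0 : M ≠ 0 := by
        intro h0; rw [h0, mul_zero] at hNM; exact hN0 hNM
      have hMlt : M < N := by
        have hp2 : 1 < p ^ 2 := by nlinarith [hp.two_le]
        calc M < p ^ 2 * M := by
                nlinarith [Nat.pos_of_ne_zero hM0]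
          _ = N := hNM.symm
      have hval : padicValNat p N = 2 + padicValNat p M := by
        rw [hNM, padicValNat.mul (pow_ne_zero _ hp.pos.ne') hM0,
          padicValNat.prime_pow]
      rw [hval]
      obtain ⟨t, ht⟩ := ih M hMlt x' y' rfl
      exact ⟨1 + t, by omega⟩
    · rw [padicValNat.eq_zero_of_not_dvd hdvd]
      exact Even.zero

/-- Key lemma: if `h` divides `2x² + 2y²` and no prime `≡ 3 mod 4` divides `h`,
then `(2x² + 2y²)/h` is not `3 mod 4`. -/
lemma key_lemma (x y : ℤ) (h : ℕ) (hdvd : (h : ℤ) ∣ 2*x^2 + 2*y^2)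
    (hodd : ∀ p : ℕ, p.Prime → p % 4 = 3 → ¬ p ∣ h) :
    ((2*x^2 + 2*y^2) / (h : ℤ)) % 4 ≠ 3 := by
  set A : ℤ := 2*x^2 + 2*y^2 with hAdef
  set a : ℤ := A / (h : ℤ) with hadef
  rcases eq_or_ne h 0 with rfl | hh0
  · simp [hadef]
  rcases eq_or_ne a 0 with h0 | ha0
  · rw [h0]; norm_num
  have hApos : 0 ≤ A := by positivity
  have hmul : A = a * (h : ℤ) := (Int.ediv_mul_cancel hdvd).symm
  have hhpos : (0:ℤ) < (h : ℤ) := by exact_mod_cast Nat.pos_of_ne_zero hh0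
  have hapos : 0 < a := by
    rcases lt_trichotomy a 0 with hl | he | hg
    · nlinarith
    · exact absurd he ha0
    · exact hg
  -- A is a sum of two squares: 2x²+2y² = (x+y)² + (x-y)²
  have hA2 : A = (x + y) ^ 2 + (x - y) ^ 2 := by ring
  -- every prime ≡ 3 mod 4 has even valuation in a.natAbs
  have heven : ∀ {q : ℕ}, q.Prime → q % 4 = 3 → Even (padicValNat q a.natAbs) := by
    intro q hq hq3
    haveI : Fact q.Prime := ⟨hq⟩
    have hANat : A.natAbs = a.natAbs * h := by
      have := congrArg Int.natAbs hmul
      simpa [Int.natAbs_mul] using this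
    have hqh : padicValNat q h = 0 :=
      padicValNat.eq_zero_of_not_dvd (hodd q hq hq3)
    have ha0' : a.natAbs ≠ 0 := fun h' => ha0 (Int.natAbs_eq_zero.mp h')
    have hvA : padicValNat q A.natAbs
        = padicValNat q a.natAbs + padicValNat q h := by
      rw [hANat, padicValNat.mul ha0' hh0]
    have hevenA : Even (padicValNat q A.natAbs) :=
      even_padicValNat_sq_add_sq q hq hq3 A.natAbs (x + y) (x - y) (by rw [← hA2])
    rw [hvA, hqh, add_zero] at hevenA
    exact hevenA
  obtain ⟨u, v, huv⟩ := (Nat.eq_sq_add_sq_iff (n := a.natAbs)).mpr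
    (fun q hq hq3 => heven (Nat.prime_of_mem_primeFactors hq) hq3)
  -- now a.natAbs = u² + v², hence a.natAbs % 4 ≠ 3
  intro hcon
  have haN : a = (a.natAbs : ℤ) := (Int.natAbs_of_nonneg hapos.le).symm
  have hmod : a.natAbs % 4 = 3 := by omega
  rw [huv] at hmod
  rcases Nat.even_or_odd u with ⟨s, rfl⟩ | ⟨s, rfl⟩ <;>
    rcases Nat.even_or_odd v with ⟨t, rfl⟩ | ⟨t, rfl⟩ <;>
    ring_nf at hmod <;> omega

/-- Lemma 3.7 (first part): a = A/h and c = C/h satisfy a ≢ 3 (mod 4) and c ≢ 3 (mod 4),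
where A = 2k²+2l², B = 8+4km+4ln, C = 2m²+2n², h = gcd(A,B,C). -/
theorem stmt_2 (k l m n : ℤ)
    (A B C : ℤ) (hA : A = 2*k^2 + 2*l^2) (hB : B = 8 + 4*k*m + 4*l*n)
    (hC : C = 2*m^2 + 2*n^2)
    (h : ℕ) (hh : (h : ℤ) = Int.gcd A (Int.gcd B C))
    (a c : ℤ) (ha : a = A / (h : ℤ)) (hc : c = C / (h : ℤ)) :
    a % 4 ≠ 3 ∧ c % 4 ≠ 3 := by
  have hdA : (h : ℤ) ∣ A := by rw [hh]; exact Int.gcd_dvd_left _ _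
  have hdB : (h : ℤ) ∣ B := by
    rw [hh]; exact dvd_trans (Int.gcd_dvd_right _ _) (Int.gcd_dvd_left _ _)
  have hdC : (h : ℤ) ∣ C := by
    rw [hh]; exact dvd_trans (Int.gcd_dvd_right _ _) (Int.gcd_dvd_right _ _)
  have hodd : ∀ p : ℕ, p.Prime → p % 4 = 3 → ¬ p ∣ h := by
    intro p hp hp3 hpdvd
    have hp' : Prime (p : ℤ) := Nat.prime_iff_prime_int.mp hp
    have hple : 3 ≤ p := by omega
    have hnot2 : ¬ (p : ℤ) ∣ 2 := by
      intro hd2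
      have : p ∣ 2 := by exact_mod_cast hd2
      have := Nat.le_of_dvd (by norm_num) this
      omega
    have hph : (p : ℤ) ∣ (h : ℤ) := Int.natCast_dvd_natCast.mpr hpdvd
    have hpA : (p : ℤ) ∣ 2 * (k ^ 2 + l ^ 2) := by
      have := hph.trans hdA; rw [hA] at this
      rw [show 2 * (k ^ 2 + l ^ 2) = 2 * k ^ 2 + 2 * l ^ 2 by ring]; exact this
    have hpC : (p : ℤ) ∣ 2 * (m ^ 2 + n ^ 2) := by
      have := hph.trans hdC; rw [hC] at this
      rw [show 2 * (m ^ 2 + n ^ 2) = 2 * m ^ 2 + 2 * n ^ 2 by ring]; exact this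
    have hkl : (p : ℤ) ∣ k ^ 2 + l ^ 2 := (hp'.dvd_mul.mp hpA).resolve_left hnot2
    have hmn : (p : ℤ) ∣ m ^ 2 + n ^ 2 := (hp'.dvd_mul.mp hpC).resolve_left hnot2
    obtain ⟨hk, hl⟩ := dvd_of_dvd_sq_add_sq p hp hp3 k l hkl
    obtain ⟨hm, hn⟩ := dvd_of_dvd_sq_add_sq p hp hp3 m n hmn
    have hpB : (p : ℤ) ∣ B := hph.trans hdB
    have h8 : (p : ℤ) ∣ 8 := by
      have hkm : (p : ℤ) ∣ 4 * k * m + 4 * l * n := by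
        obtain ⟨k', rfl⟩ := hk
        obtain ⟨l', rfl⟩ := hl
        exact ⟨4 * k' * m + 4 * l' * n, by ring⟩
      have : (p : ℤ) ∣ B - (4 * k * m + 4 * l * n) := hpB.sub hkm
      rw [hB] at this
      rw [show (8:ℤ) = 8 + 4 * k * m + 4 * l * n - (4 * k * m + 4 * l * n) by ring]; exact this
    have h8' : p ∣ 8 := by exact_mod_cast h8
    have := Nat.le_of_dvd (by norm_num) h8'
    interval_cases p <;> omega
  constructor
  · rw [ha, hA]
    exact key_lemma k l h (by rw [← hA]; exact hdA) hodd
  · rw [hc, hC]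
    exact key_lemma m n h (by rw [← hC]; exact hdC) hodd
end

section
/- Let k, l, m, n be integers. Set A = 2k² + 2l², B = 8 + 4km + 4ln, C = 2m² + 2n², and let h = gcd(A, B, C). Then the integer b = B/h is odd if and only if 8 divides h. In particular, if k, l, m, n are not all even, then b is even. -/
private lemma sq4 (k l : ℤ) (h4 : (4:ℤ) ∣ k^2 + l^2) : Even k ∧ Even l := by
  rcases Int.even_or_odd k with ⟨a, ha⟩ | ⟨a, ha⟩ <;>
    rcases Int.even_or_odd l with ⟨c, hc⟩ | ⟨c, hc⟩ <;> subst ha <;> subst hc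
  · exact ⟨⟨a, rfl⟩, ⟨c, rfl⟩⟩
  · exfalso
    have h1 : (a+a)^2 + (2*c+1)^2 = 4*(a^2+c^2+c) + 1 := by ring
    rw [h1] at h4
    have := (dvd_add_right ⟨a^2+c^2+c, rfl⟩).mp h4
    norm_num at this
  · exfalso
    have h1 : (2*a+1)^2 + (c+c)^2 = 4*(a^2+a+c^2) + 1 := by ring
    rw [h1] at h4
    have := (dvd_add_right ⟨a^2+a+c^2, rfl⟩).mp h4
    norm_num at this
  · exfalso
    have h1 : (2*a+1)^2 + (2*c+1)^2 = 4*(a^2+a+c^2+c) + 2 := by ring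
    rw [h1] at h4
    have := (dvd_add_right ⟨a^2+a+c^2+c, rfl⟩).mp h4
    norm_num at this

/-- Lemma 3.7 (second part): b = B/h is odd iff 8 ∣ h; in particular, if k, l, m, n
are not all even then b is even. Here A = 2k²+2l², B = 8+4km+4ln, C = 2m²+2n²,
h = gcd(A,B,C). -/
theorem stmt_3 (k l m n : ℤ)
    (A B C : ℤ) (hA : A = 2*k^2 + 2*l^2) (hB : B = 8 + 4*k*m + 4*l*n)
    (hC : C = 2*m^2 + 2*n^2)
    (h : ℕ) (hh : (h : ℤ) = Int.gcd A (Int.gcd B C))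
    (b : ℤ) (hb : b = B / (h : ℤ)) :
    (Odd b ↔ 8 ∣ h) ∧ (¬ (Even k ∧ Even l ∧ Even m ∧ Even n) → Even b) := by
  have hdA : (h:ℤ) ∣ A := by rw [hh]; exact Int.gcd_dvd_left _ _
  have hdB : (h:ℤ) ∣ B := by
    rw [hh]; exact dvd_trans (Int.gcd_dvd_right _ _) (Int.gcd_dvd_left _ _)
  have hdC : (h:ℤ) ∣ C := by
    rw [hh]; exact dvd_trans (Int.gcd_dvd_right _ _) (Int.gcd_dvd_right _ _)
  have hBh : (h:ℤ) * b = B := by rw [hb]; exact Int.mul_ediv_cancel' hdB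
  -- key fact: 8 ∣ h → all even
  have key : (8:ℤ) ∣ (h:ℤ) → Even k ∧ Even l ∧ Even m ∧ Even n := by
    intro h8
    have h8A : (8:ℤ) ∣ A := h8.trans hdA
    have h8C : (8:ℤ) ∣ C := h8.trans hdC
    have h4kl : (4:ℤ) ∣ k^2 + l^2 := by
      obtain ⟨t, ht⟩ := h8A
      exact ⟨t, by linarith [hA ▸ ht]⟩
    have h4mn : (4:ℤ) ∣ m^2 + n^2 := by
      obtain ⟨t, ht⟩ := h8C
      exact ⟨t, by linarith [hC ▸ ht]⟩
    obtain ⟨hek, hel⟩ := sq4 k l h4kl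
    obtain ⟨hem, hen⟩ := sq4 m n h4mn
    exact ⟨hek, hel, hem, hen⟩
  -- all even → 8 ∣ h (as integers)
  have evkey : Even k → Even l → Even m → Even n → (8:ℤ) ∣ (h:ℤ) := by
    rintro ⟨a, rfl⟩ ⟨c, rfl⟩ ⟨d, rfl⟩ ⟨e, rfl⟩
    have h8A : (8:ℤ) ∣ A := ⟨a^2 + c^2, by rw [hA]; ring⟩
    have h8B : (8:ℤ) ∣ B := ⟨1 + 2*(a*d) + 2*(c*e), by rw [hB]; ring⟩
    have h8C : (8:ℤ) ∣ C := ⟨d^2 + e^2, by rw [hC]; ring⟩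
    rw [hh]
    exact Int.dvd_coe_gcd h8A (Int.dvd_coe_gcd h8B h8C)
  -- main equivalence
  have main : Odd b ↔ (8:ℤ) ∣ (h:ℤ) := by
    constructor
    · intro hob
      have h4B : (4:ℤ) ∣ B := ⟨2 + k*m + l*n, by rw [hB]; ring⟩
      have h2nb : ¬ (2:ℤ) ∣ b := by
        obtain ⟨c, rfl⟩ := hob; omega
      have h4hb : (4:ℤ) ∣ (h:ℤ) * b := by rw [hBh]; exact h4B
      have h2h : (2:ℤ) ∣ (h:ℤ) := by
        have h2hb : (2:ℤ) ∣ (h:ℤ) * b := dvd_trans (by norm_num) h4hb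
        rcases (Int.Prime.dvd_mul' Nat.prime_two h2hb) with h' | h'
        · exact h'
        · exact absurd h' h2nb
      obtain ⟨h1, hh1⟩ := h2h
      have h2h1 : (2:ℤ) ∣ h1 := by
        have h2h1b : (2:ℤ) ∣ h1 * b := by
          obtain ⟨w, hw⟩ := h4hb
          refine ⟨w, mul_left_cancel₀ (two_ne_zero) ?_⟩
          linear_combination hw - b * hh1
        rcases (Int.Prime.dvd_mul' Nat.prime_two h2h1b) with h' | h'
        · exact h'
        · exact absurd h' h2nb
      have h4h : (4:ℤ) ∣ (h:ℤ) := by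
        obtain ⟨v, hv⟩ := h2h1
        exact ⟨v, by rw [hh1, hv]; ring⟩
      obtain ⟨u, hu⟩ := h4h
      have h4h' : (4:ℤ) ∣ (h:ℤ) := ⟨u, hu⟩
      have h4A : (4:ℤ) ∣ A := h4h'.trans hdA
      have h4C : (4:ℤ) ∣ C := h4h'.trans hdC
      have h2kl : Even (k^2 + l^2) := by
        obtain ⟨t, ht⟩ := h4A
        exact ⟨t, by linarith [hA ▸ ht]⟩
      have h2mn : Even (m^2 + n^2) := by
        obtain ⟨t, ht⟩ := h4C
        exact ⟨t, by linarith [hC ▸ ht]⟩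
      have hkl : Even k ↔ Even l := by
        simpa [Int.even_add, Int.even_pow] using h2kl
      have hmn : Even m ↔ Even n := by
        simpa [Int.even_add, Int.even_pow] using h2mn
      -- common machinery for the contradiction cases
      have hcore : ¬ (8:ℤ) ∣ A ∨ ¬ (8:ℤ) ∣ C → Odd (2 + k*m + l*n) := by
        intro hn8
        have huodd : Odd u := by
          rcases Int.even_or_odd u with ⟨v, rfl⟩ | ho
          · exfalso
            have h8h : (8:ℤ) ∣ (h:ℤ) := ⟨v, by rw [hu]; ring⟩
            rcases hn8 with hn | hn
            · exact hn (h8h.trans hdA)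
            · exact hn (h8h.trans hdC)
          · exact ho
        have heq : 2 + k*m + l*n = u * b := by
          have h4ne : (4:ℤ) ≠ 0 := by norm_num
          apply mul_left_cancel₀ h4ne
          linear_combination -hB - hBh + b * hu
        rw [heq]
        exact huodd.mul hob
      by_cases hek : Even k
      · by_cases hem : Even m
        · exact evkey hek (hkl.mp hek) hem (hmn.mp hem)
        · exfalso
          have hom : Odd m := Int.not_even_iff_odd.mp hem
          have hon : Odd n := Int.not_even_iff_odd.mp (fun he => hem (hmn.mpr he))
          have h8C : ¬ (8:ℤ) ∣ C := by
            obtain ⟨d, rfl⟩ := hom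
            obtain ⟨e, rfl⟩ := hon
            intro h8
            have h1 : C = 8*(d^2+d+e^2+e) + 4 := by rw [hC]; ring
            rw [h1] at h8
            have := (dvd_add_right ⟨d^2+d+e^2+e, rfl⟩).mp h8
            norm_num at this
          have hodd := hcore (Or.inr h8C)
          have hev : Even (2 + k*m + l*n) := by
            obtain ⟨a, rfl⟩ := hek
            obtain ⟨c, rfl⟩ := hkl.mp ⟨a, rfl⟩
            exact ⟨1 + a*m + c*n, by ring⟩
          exact (Int.not_odd_iff_even.mpr hev) hodd
      · exfalso
        have hok : Odd k := Int.not_even_iff_odd.mp hek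
        have hol : Odd l := Int.not_even_iff_odd.mp (fun he => hek (hkl.mpr he))
        have h8A : ¬ (8:ℤ) ∣ A := by
          obtain ⟨a, rfl⟩ := hok
          obtain ⟨c, rfl⟩ := hol
          intro h8
          have h1 : A = 8*(a^2+a+c^2+c) + 4 := by rw [hA]; ring
          rw [h1] at h8
          have := (dvd_add_right ⟨a^2+a+c^2+c, rfl⟩).mp h8
          norm_num at this
        have hodd := hcore (Or.inl h8A)
        have hev : Even (2 + k*m + l*n) := by
          obtain ⟨a, rfl⟩ := hok
          obtain ⟨c, rfl⟩ := hol
          rcases Int.even_or_odd m with ⟨d, rfl⟩ | ⟨d, rfl⟩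
          · obtain ⟨e, rfl⟩ := hmn.mp ⟨d, rfl⟩
            exact ⟨1 + (2*a+1)*d + (2*c+1)*e, by ring⟩
          · have hon : Odd n := Int.not_even_iff_odd.mp
              (fun he => (Int.not_even_iff_odd.mpr ⟨d, rfl⟩) (hmn.mpr he))
            obtain ⟨e, rfl⟩ := hon
            exact ⟨2 + 2*a*d + a + d + 2*c*e + c + e, by ring⟩
        exact (Int.not_odd_iff_even.mpr hev) hodd
    · intro h8
      obtain ⟨hek, hel, hem, hen⟩ := key h8
      obtain ⟨a, rfl⟩ := hek
      obtain ⟨c, rfl⟩ := hel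
      obtain ⟨d, rfl⟩ := hem
      obtain ⟨e, rfl⟩ := hen
      have hB16 : B = 8 + 16 * (a*d + c*e) := by rw [hB]; ring
      rcases Int.even_or_odd b with ⟨c', hc'⟩ | hob
      · exfalso
        obtain ⟨u, hu⟩ := h8
        have h16 : (16:ℤ) ∣ B := ⟨u * c', by rw [← hBh, hu, hc']; ring⟩
        obtain ⟨w, hw⟩ := h16
        omega
      · exact hob
  refine ⟨main.trans ?_, ?_⟩
  · constructor
    · intro h8
      exact_mod_cast h8
    · intro h8
      exact_mod_cast Int.natCast_dvd_natCast.mpr h8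
  · intro hne
    rcases Int.even_or_odd b with he | ho
    · exact he
    · exact absurd (key (main.mp ho)) hne
end

section
/- Let k, l, m, n be integers, not all even. Define Q(x,y) = 2(kx+my)² + 2(lx+ny)² + 8xy and assume Q(x,y) > 0 for all integers (x,y) ≠ (0,0). Then there exist integers x and y, not both zero, such that the positive integer d = Q(x,y) satisfies: 8 ∤ d and every odd prime dividing d is ≡ 1 (mod 4). -/
private lemma lem_one {p : ℕ} (hp : p.Prime) (hodd : p % 2 = 1) {a b : ℤ}
    (h : (p : ℤ) ∣ a ^ 2 + b ^ 2) (hna : ¬ (p : ℤ) ∣ a) : p % 4 = 1 := by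
  haveI : Fact p.Prime := ⟨hp⟩
  have hz : ((a : ZMod p)) ^ 2 + (b : ZMod p) ^ 2 = 0 := by
    have h0 := (ZMod.intCast_zmod_eq_zero_iff_dvd _ p).mpr h
    push_cast at h0
    exact h0
  have ha : (a : ZMod p) ≠ 0 := fun h0 => hna ((ZMod.intCast_zmod_eq_zero_iff_dvd _ p).mp h0)
  have hsq : IsSquare (-1 : ZMod p) := by
    refine ⟨(b : ZMod p) * (a : ZMod p)⁻¹, ?_⟩
    field_simp
    linear_combination -hz
  have h3 := ZMod.exists_sq_eq_neg_one_iff.mp hsq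
  omega

private lemma core (k l m n : ℤ) (hmn : ¬ (Even m ∧ Even n))
    (hpos : ∀ x y : ℤ, (x, y) ≠ (0, 0) →
      0 < 2*(k*x + m*y)^2 + 2*(l*x + n*y)^2 + 8*x*y) :
    ∃ x y : ℤ, (x, y) ≠ (0, 0) ∧
      0 < 2*(k*x + m*y)^2 + 2*(l*x + n*y)^2 + 8*x*y ∧
      ¬ (8 ∣ 2*(k*x + m*y)^2 + 2*(l*x + n*y)^2 + 8*x*y) ∧
      ∀ p : ℕ, p.Prime → Odd p →
        (p : ℤ) ∣ 2*(k*x + m*y)^2 + 2*(l*x + n*y)^2 + 8*x*y → p % 4 = 1 := by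
  -- k, l are not both zero
  have hkl : k ≠ 0 ∨ l ≠ 0 := by
    by_contra hc
    push_neg at hc
    have h10 := hpos 1 0 (by simp)
    rw [hc.1, hc.2] at h10
    norm_num at h10
  -- factor out the gcd of k and l
  obtain ⟨G, k1, l1, hk1, hl1, hcop⟩ :
      ∃ (G k1 l1 : ℤ), k = G * k1 ∧ l = G * l1 ∧ Int.gcd k1 l1 = 1 := by
    have hgpos : 0 < Int.gcd k l := Int.gcd_pos_iff.mpr hkl
    have hd1 : ((Int.gcd k l : ℤ)) ∣ k := Int.gcd_dvd_left k l
    have hd2 : ((Int.gcd k l : ℤ)) ∣ l := Int.gcd_dvd_right k l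
    refine ⟨(Int.gcd k l : ℤ), k / (Int.gcd k l : ℤ), l / (Int.gcd k l : ℤ),
      (Int.mul_ediv_cancel' hd1).symm, (Int.mul_ediv_cancel' hd2).symm, ?_⟩
    have h := Int.gcd_mul_left ((Int.gcd k l : ℤ)) (k / (Int.gcd k l : ℤ)) (l / (Int.gcd k l : ℤ))
    rw [Int.mul_ediv_cancel' hd1, Int.mul_ediv_cancel' hd2] at h
    simp only [Int.natAbs_natCast] at h
    have h2 : Int.gcd k l * Int.gcd (k / (Int.gcd k l : ℤ)) (l / (Int.gcd k l : ℤ))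
        = Int.gcd k l * 1 := by rw [mul_one, ← h]
    exact Nat.eq_of_mul_eq_mul_left hgpos h2
  subst hk1
  subst hl1
  -- basic abbreviations
  obtain ⟨D1, hD1⟩ : ∃ D1 : ℤ, D1 = k1*n - l1*m := ⟨_, rfl⟩
  obtain ⟨N, hN⟩ : ∃ N : ℤ, N = k1^2 + l1^2 := ⟨_, rfl⟩
  obtain ⟨S, hS⟩ : ∃ S : ℤ, S = (G*k1*n - G*l1*m)^2 - 4*(G*k1*m + G*l1*n) := ⟨_, rfl⟩
  -- positivity facts
  have ha0 : 0 < (G*k1)^2 + (G*l1)^2 := by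
    have h10 := hpos 1 0 (by simp)
    nlinarith [h10]
  have hS4 : 4 < S := by
    have hb := hpos (2*((G*k1)*m + (G*l1)*n) + 4) (-2*((G*k1)^2 + (G*l1)^2)) (by
      intro hEq
      rw [Prod.mk.injEq] at hEq
      have h2 := hEq.2
      nlinarith [ha0])
    have hval : 2*(G*k1*(2*((G*k1)*m + (G*l1)*n) + 4) + m*(-2*((G*k1)^2 + (G*l1)^2)))^2
        + 2*(G*l1*(2*((G*k1)*m + (G*l1)*n) + 4) + n*(-2*((G*k1)^2 + (G*l1)^2)))^2
        + 8*(2*((G*k1)*m + (G*l1)*n) + 4)*(-2*((G*k1)^2 + (G*l1)^2))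
        = 8*((G*k1)^2 + (G*l1)^2)*(S - 4) := by
      rw [hS]; ring
    rw [hval] at hb
    by_contra hc
    push_neg at hc
    nlinarith [hb, ha0]
  have hSne : S.natAbs ≠ 0 := by
    intro h0
    have := Int.natAbs_eq_zero.mp h0
    omega
  -- the product of the bad primes dividing S
  obtain ⟨P, hP⟩ : ∃ P : ℕ, P = ∏ q ∈ S.natAbs.primeFactors.filter (fun q => q % 4 = 3), q := ⟨_, rfl⟩
  have hPfact : ∀ q : ℕ, q.Prime → q ∣ P → q % 4 = 3 ∧ (q:ℤ) ∣ S := by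
    intro q hq hqP
    rw [hP] at hqP
    obtain ⟨a, haS, hqa⟩ := (hq.prime.dvd_finset_prod_iff _).mp hqP
    simp only [Finset.mem_filter, Nat.mem_primeFactors] at haS
    obtain ⟨⟨hap, haD, _⟩, ha4⟩ := haS
    have hqeq : q = a := (Nat.prime_dvd_prime_iff_eq hq hap).mp hqa
    subst hqeq
    refine ⟨ha4, ?_⟩
    exact (Int.dvd_natAbs).mp (Int.natCast_dvd_natCast.mpr haD)
  have hPmem : ∀ p : ℕ, p.Prime → p % 4 = 3 → (p:ℤ) ∣ S → p ∣ P := by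
    intro p hp h4 hdvd
    rw [hP]
    apply Finset.dvd_prod_of_mem
    simp only [Finset.mem_filter, Nat.mem_primeFactors]
    refine ⟨⟨hp, ?_, hSne⟩, h4⟩
    have h1 := Int.natAbs_dvd_natAbs.mpr hdvd
    simpa using h1
  have hP2 : ¬ 2 ∣ P := fun h => by
    have h3 := (hPfact 2 Nat.prime_two h).1
    omega
  -- no bad prime divides N (a coprime sum of two squares)
  have hNdvd : ∀ q : ℕ, q.Prime → q % 4 = 3 → ¬ ((q:ℤ) ∣ N) := by
    intro q hq h4 hdvd
    have hqZ : Prime (q:ℤ) := Nat.prime_iff_prime_int.mp hq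
    by_cases hk : (q:ℤ) ∣ k1
    · have hl2 : (q:ℤ) ∣ l1^2 := by
        have he : l1^2 = N - k1^2 := by rw [hN]; ring
        rw [he]
        exact dvd_sub hdvd (dvd_pow hk two_ne_zero)
      have hl : (q:ℤ) ∣ l1 := hqZ.dvd_of_dvd_pow hl2
      have hg : (q:ℤ) ∣ ((Int.gcd k1 l1 : ℤ)) := Int.dvd_coe_gcd hk hl
      rw [hcop] at hg
      have : (q:ℕ) ∣ 1 := by exact_mod_cast hg
      have := Nat.dvd_one.mp this
      exact hq.ne_one this
    · have h1 := lem_one hq (by omega) (show (q:ℤ) ∣ k1^2 + l1^2 from hN ▸ hdvd) hk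
      omega
  -- 2N is coprime to P
  have hco : IsCoprime (2*N) ((P : ℤ)) := by
    rw [Int.isCoprime_iff_gcd_eq_one]
    by_contra hg
    obtain ⟨q, hq, hqd⟩ := Nat.exists_prime_and_dvd hg
    have hq1 : (q:ℤ) ∣ 2*N :=
      dvd_trans (Int.natCast_dvd_natCast.mpr hqd) (Int.gcd_dvd_left _ _)
    have hq2 : (q:ℤ) ∣ (P:ℤ) :=
      dvd_trans (Int.natCast_dvd_natCast.mpr hqd) (Int.gcd_dvd_right _ _)
    have hqP : q ∣ P := Int.natCast_dvd_natCast.mp hq2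
    obtain ⟨h43, _⟩ := hPfact q hq hqP
    have hqZ : Prime (q:ℤ) := Nat.prime_iff_prime_int.mp hq
    rcases hqZ.dvd_mul.mp hq1 with h2 | hNq
    · have : (q:ℕ) ∣ 2 := by exact_mod_cast h2
      have := Nat.le_of_dvd (by norm_num) this
      interval_cases q <;> omega
    · exact hNdvd q hq h43 hNq
  obtain ⟨u, v, huv⟩ := hco
  -- the construction
  obtain ⟨c, hc⟩ : ∃ c : ℤ, c = u * (1 - D1) := ⟨_, rfl⟩
  obtain ⟨t, ht⟩ : ∃ t : ℤ, t = c * (1 + (P:ℤ)) := ⟨_, rfl⟩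
  obtain ⟨X, hX⟩ : ∃ X : ℤ, X = t * D1 + t^2 * N := ⟨_, rfl⟩
  obtain ⟨r, hr⟩ : ∃ r : ℤ, r = G*k1*X + m - 2*t*l1 := ⟨_, rfl⟩
  obtain ⟨s, hs⟩ : ∃ s : ℤ, s = G*l1*X + n + 2*t*k1 := ⟨_, rfl⟩
  obtain ⟨W, hW⟩ : ∃ W : ℤ, W = D1 + 2*t*N := ⟨_, rfl⟩
  -- key algebraic identities
  have key1 : 2*(G*k1*X + m*1)^2 + 2*(G*l1*X + n*1)^2 + 8*X*1 = 2*(r^2 + s^2) := by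
    rw [hr, hs, hX, hD1, hN]; ring
  have keyW : k1*s - l1*r = W := by
    rw [hr, hs, hW, hD1, hN]; ring
  have keyR : 4*(k1*r + l1*s) - G*W^2 = 4*(k1*m + l1*n) - G*D1^2 := by
    rw [hr, hs, hW, hX, hN]; ring
  have keyS : G*(4*(k1*m + l1*n) - G*D1^2) = -S := by
    rw [hS, hD1]; ring
  have keyWP : W - (P:ℤ)*((1 - D1)*(1 - v - v*(P:ℤ))) = 1 := by
    rw [hW, ht, hc]
    linear_combination ((1 - D1)*(1 + (P:ℤ))) * huv
  -- parity facts
  have hPodd : P % 2 = 1 := by omega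
  have htE : (2:ℤ) ∣ t := by
    rw [ht]
    have h2 : (2:ℤ) ∣ (1 + (P:ℤ)) := by
      have : (P:ℤ) % 2 = 1 := by omega
      omega
    exact Dvd.dvd.mul_left h2 c
  obtain ⟨t2, ht2⟩ := htE
  have hXE : (2:ℤ) ∣ X := ⟨t2*D1 + t*t2*N, by rw [hX, ht2]; ring⟩
  obtain ⟨X2, hX2⟩ := hXE
  have hrm : ∃ j : ℤ, r = m + 2*j := ⟨G*k1*X2 - t*l1, by rw [hr, hX2]; ring⟩
  have hsn : ∃ j : ℤ, s = n + 2*j := ⟨G*l1*X2 + t*k1, by rw [hs, hX2]; ring⟩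
  have hrs : ¬ (Even r ∧ Even s) := by
    rintro ⟨⟨a, ha⟩, ⟨b, hb⟩⟩
    obtain ⟨j1, hj1⟩ := hrm
    obtain ⟨j2, hj2⟩ := hsn
    exact hmn ⟨⟨a - j1, by omega⟩, ⟨b - j2, by omega⟩⟩
  -- conclusion
  refine ⟨X, 1, by simp, hpos X 1 (by simp), ?_, ?_⟩
  · -- 8 does not divide
    intro h8
    rw [key1] at h8
    obtain ⟨w, hw⟩ := h8
    have h4 : (4:ℤ) ∣ r^2 + s^2 := ⟨w, by linarith⟩
    rcases Int.even_or_odd r with hre | hro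
    · rcases Int.even_or_odd s with hse | hso
      · exact hrs ⟨hre, hse⟩
      · obtain ⟨a, ha⟩ := hre
        obtain ⟨b, hb⟩ := hso
        have he : r^2 + s^2 = 4*(a*a + b*b + b) + 1 := by rw [ha, hb]; ring
        rw [he] at h4
        have h1 : (4:ℤ) ∣ 1 := (dvd_add_right ⟨a*a + b*b + b, rfl⟩).mp h4
        norm_num at h1
    · obtain ⟨a, ha⟩ := hro
      rcases Int.even_or_odd s with hse | hso
      · obtain ⟨b, hb⟩ := hse
        have he : r^2 + s^2 = 4*(a*a + a + b*b) + 1 := by rw [ha, hb]; ring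
        rw [he] at h4
        have h1 : (4:ℤ) ∣ 1 := (dvd_add_right ⟨a*a + a + b*b, rfl⟩).mp h4
        norm_num at h1
      · obtain ⟨b, hb⟩ := hso
        have he : r^2 + s^2 = 4*(a*a + a + b*b + b) + 2 := by rw [ha, hb]; ring
        rw [he] at h4
        have h1 : (4:ℤ) ∣ 2 := (dvd_add_right ⟨a*a + a + b*b + b, rfl⟩).mp h4
        norm_num at h1
  · -- odd primes are ≡ 1 mod 4
    intro p hp hpodd hdvd
    have hp2 : p % 2 = 1 := Nat.odd_iff.mp hpodd
    rw [key1] at hdvd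
    have hpZ : Prime (p:ℤ) := Nat.prime_iff_prime_int.mp hp
    have hdvd2 : (p:ℤ) ∣ r^2 + s^2 := by
      rcases hpZ.dvd_mul.mp hdvd with h2 | he
      · exfalso
        have : (p:ℕ) ∣ 2 := by exact_mod_cast h2
        have := Nat.le_of_dvd (by norm_num) this
        have := hp.two_le
        interval_cases p <;> omega
      · exact he
    by_cases hpr : (p:ℤ) ∣ r
    · have hps : (p:ℤ) ∣ s := by
        apply hpZ.dvd_of_dvd_pow (n := 2)
        have he : s^2 = (r^2 + s^2) - r^2 := by ring
        rw [he]
        exact dvd_sub hdvd2 (dvd_pow hpr two_ne_zero)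
      have hpW : (p:ℤ) ∣ W := by
        rw [← keyW]
        exact dvd_sub (hps.mul_left k1) (hpr.mul_left l1)
      have hpS : (p:ℤ) ∣ S := by
        have h1 : (p:ℤ) ∣ 4*(k1*r + l1*s) - G*W^2 :=
          dvd_sub ((dvd_add (hpr.mul_left k1) (hps.mul_left l1)).mul_left 4)
            ((dvd_pow hpW two_ne_zero).mul_left G)
        rw [keyR] at h1
        have h2 := h1.mul_left G
        rw [keyS] at h2
        exact dvd_neg.mp h2
      by_contra h4
      have hp43 : p % 4 = 3 := by omega
      have hpP : p ∣ P := hPmem p hp hp43 hpS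
      have hpPZ : (p:ℤ) ∣ (P:ℤ) := Int.natCast_dvd_natCast.mpr hpP
      have h1 : (p:ℤ) ∣ 1 := keyWP ▸ dvd_sub hpW (hpPZ.mul_right _)
      have : (p:ℕ) ∣ 1 := by exact_mod_cast h1
      exact hp.ne_one (Nat.dvd_one.mp this)
    · exact lem_one hp hp2 hdvd2 hpr

/-- The number-theoretic core of the rank-four case of Theorem 3.5: if k, l, m, n are
not all even and Q(x,y) = 2(kx+my)²+2(lx+ny)²+8xy is positive away from the origin,
then Q represents a positive integer d satisfying condition (**): 8 ∤ d and every odd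
prime dividing d is ≡ 1 (mod 4). -/
theorem stmt_5 (k l m n : ℤ)
    (hne : ¬ (Even k ∧ Even l ∧ Even m ∧ Even n))
    (Q : ℤ → ℤ → ℤ)
    (hQ : ∀ x y, Q x y = 2*(k*x + m*y)^2 + 2*(l*x + n*y)^2 + 8*x*y)
    (hpos : ∀ x y : ℤ, (x, y) ≠ (0, 0) → 0 < Q x y) :
    ∃ x y : ℤ, (x, y) ≠ (0, 0) ∧ 0 < Q x y ∧ ¬ (8 ∣ Q x y) ∧
      ∀ p : ℕ, p.Prime → Odd p → (p : ℤ) ∣ Q x y → p % 4 = 1 := by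
  by_cases hmn : Even m ∧ Even n
  · -- then (k,l) is not both even; swap the roles
    have hkl : ¬ (Even k ∧ Even l) := fun h => hne ⟨h.1, h.2, hmn.1, hmn.2⟩
    have hpos' : ∀ x y : ℤ, (x, y) ≠ (0, 0) →
        0 < 2*(m*x + k*y)^2 + 2*(n*x + l*y)^2 + 8*x*y := by
      intro x y hxy
      have hyx : (y, x) ≠ (0, 0) := by
        simp only [ne_eq, Prod.mk.injEq] at hxy ⊢
        tauto
      have h1 := hpos y x hyx
      rw [hQ] at h1
      have heq : 2*(k*y + m*x)^2 + 2*(l*y + n*x)^2 + 8*y*x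
          = 2*(m*x + k*y)^2 + 2*(n*x + l*y)^2 + 8*x*y := by ring
      linarith [heq ▸ h1]
    obtain ⟨x, y, hxy, h1, h2, h3⟩ := core m n k l hkl hpos'
    refine ⟨y, x, ?_, ?_, ?_, ?_⟩
    · simp only [ne_eq, Prod.mk.injEq] at hxy ⊢
      tauto
    all_goals {
      rw [hQ]
      have heq : 2*(k*y + m*x)^2 + 2*(l*y + n*x)^2 + 8*y*x
          = 2*(m*x + k*y)^2 + 2*(n*x + l*y)^2 + 8*x*y := by ring
      rw [heq]
      first
      | exact h1
      | exact h2
      | exact h3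
    }
  · have hpos' : ∀ x y : ℤ, (x, y) ≠ (0, 0) →
        0 < 2*(k*x + m*y)^2 + 2*(l*x + n*y)^2 + 8*x*y := by
      intro x y hxy
      have h1 := hpos x y hxy
      rwa [hQ] at h1
    obtain ⟨x, y, hxy, h1, h2, h3⟩ := core k l m n hmn hpos'
    exact ⟨x, y, hxy, by rwa [hQ], by rwa [hQ], by rwa [hQ]⟩
end

section
/- Let a, n be integers and d a positive even integer with a > 0 and a²·d = 2n² + 2. Then a ≡ 1 (mod 4). -/
lemma aux_mod_four (m : ℕ) (hm : Odd m)
    (h : ∀ p : ℕ, p.Prime → p ∣ m → p % 4 ≠ 3) : m % 4 = 1 := by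
  induction m using induction_on_primes with
  | zero => simp at hm
  | one => rfl
  | prime_mul p m hp ih =>
    have hpm : Odd p ∧ Odd m := by
      rw [Nat.odd_mul] at hm; exact hm
    have hp3 : p % 4 ≠ 3 := h p hp (dvd_mul_right p m)
    have hp1 : p % 4 = 1 := by
      have := hp.two_le
      have : p % 2 = 1 := Nat.odd_iff.mp hpm.1
      omega
    have hm1 : m % 4 = 1 :=
      ih hpm.2 (fun q hq hqd => h q hq (Dvd.dvd.mul_left hqd p))
    rw [Nat.mul_mod, hp1, hm1]

/-- If d is a positive even integer, a > 0 and a²·d = 2n² + 2, then a ≡ 1 (mod 4). -/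
theorem stmt_8 (a n d : ℤ) (hd : 0 < d) (hde : Even d) (ha : 0 < a)
    (heq : a^2 * d = 2*n^2 + 2) :
    a % 4 = 1 := by
  -- a is odd
  have ha_odd : Odd a := by
    by_contra hodd
    rw [Int.not_odd_iff_even] at hodd
    obtain ⟨b, hb⟩ := hodd
    obtain ⟨e, he⟩ := hde
    subst hb he
    have hn := Int.even_or_odd n
    rcases hn with ⟨k, hk⟩ | ⟨k, hk⟩ <;> subst hk <;> ring_nf at heq <;> omega
  -- a ∣ n² + 1
  have hdvd : a ∣ n^2 + 1 := by
    have h2 : IsCoprime a 2 := by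
      rcases ha_odd with ⟨k, hk⟩
      exact ⟨1, -k, by omega⟩
    have : a ∣ 2 * (n^2 + 1) := ⟨a * d, by linarith [heq]⟩
    exact (IsCoprime.dvd_of_dvd_mul_left h2 this)
  -- -1 is a square mod a.natAbs
  have hsq : IsSquare (-1 : ZMod a.natAbs) := by
    refine ⟨(n : ZMod a.natAbs), ?_⟩
    have : ((n^2 + 1 : ℤ) : ZMod a.natAbs) = 0 := by
      rw [ZMod.intCast_zmod_eq_zero_iff_dvd]
      exact (Int.natAbs_dvd.mpr hdvd)
    push_cast at this
    linear_combination -this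
  have hodd' : Odd a.natAbs := Int.natAbs_odd.mpr ha_odd
  have := aux_mod_four a.natAbs hodd' (fun p hp hpd =>
    Nat.mod_four_ne_three_of_mem_primeFactors_of_isSquare_neg_one
      (Nat.mem_primeFactors.mpr ⟨hp, hpd, Int.natAbs_ne_zero.mpr ha.ne'⟩) hsq)
  omega
end

section
/- Let n be a natural number. Then there exist integers x, y with 2x² + (1 + 2n)xy + (1 + n²)y² = 1 if and only if n = 0 or n = 1. -/
/-- Lemma 3.10: the form 2x² + (1+2n)xy + (1+n²)y² represents 1 over ℤ
iff n = 0 or n = 1. -/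
theorem stmt_11 (n : ℕ) :
    (∃ x y : ℤ, 2*x^2 + (1 + 2*(n : ℤ))*x*y + (1 + (n : ℤ)^2)*y^2 = 1) ↔
      (n = 0 ∨ n = 1) := by
  constructor
  · rintro ⟨x, y, h⟩
    by_contra hn
    push_neg at hn
    have hn2 : (2 : ℤ) ≤ (n : ℤ) := by
      have : 2 ≤ n := by omega
      exact_mod_cast this
    rcases eq_or_ne y 0 with hy | hy
    · subst hy
      have hz : (2:ℤ) * (x*x) = 1 := by ring_nf at h ⊢; linarith
      omega
    · have hy1 : 1 ≤ y^2 := by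
        have := sq_pos_of_ne_zero hy
        omega
      nlinarith [sq_nonneg (4*x + (1 + 2*(n:ℤ))*y), sq_nonneg y, sq_nonneg (n:ℤ),
        mul_le_mul_of_nonneg_left hy1 (by nlinarith : (0:ℤ) ≤ 4*(n:ℤ)^2 - 4*(n:ℤ) + 7)]
  · rintro (rfl | rfl)
    · exact ⟨0, 1, by norm_num⟩
    · exact ⟨1, -1, by norm_num⟩
end

section
/- Let a, b, c be integers with c even, let M be the symmetric matrix [[-2, 0, a], [0, -2, b], [a, b, c]], and set d = 2a² + 2b² + 4c (the determinant of M). Assume d ≡ 2 (mod 8). Then there exist integers s, t such that, with P = [[1, 0, s], [0, 1, t], [0, 0, 1]], the matrix PᵀMP equals either [[-2, 0, 1], [0, -2, 0], [1, 0, (d-2)/4]] or [[-2, 0, 0], [0, -2, 1], [0, 1, (d-2)/4]]. -/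
open Matrix

/-- Lemma 4.2, case d ≡ 2 (mod 8): the Gram matrix [[-2,0,a],[0,-2,b],[a,b,c]]
(c even) of determinant d can be put by a base change P = [[1,0,s],[0,1,t],[0,0,1]]
into one of the two normal forms with bottom-right entry (d-2)/4. -/
theorem stmt_14 (a b c : ℤ) (hc : Even c) (d : ℤ) (hd : d = 2*a^2 + 2*b^2 + 4*c)
    (hd8 : d % 8 = 2) :
    ∃ s t : ℤ,
      ((!![1, 0, s; 0, 1, t; 0, 0, 1] : Matrix (Fin 3) (Fin 3) ℤ)ᵀ *
          !![-2, 0, a; 0, -2, b; a, b, c] * !![1, 0, s; 0, 1, t; 0, 0, 1] =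
        !![-2, 0, 1; 0, -2, 0; 1, 0, (d - 2) / 4]) ∨
      ((!![1, 0, s; 0, 1, t; 0, 0, 1] : Matrix (Fin 3) (Fin 3) ℤ)ᵀ *
          !![-2, 0, a; 0, -2, b; a, b, c] * !![1, 0, s; 0, 1, t; 0, 0, 1] =
        !![-2, 0, 0; 0, -2, 1; 0, 1, (d - 2) / 4]) := by
  subst hd
  obtain ⟨c', rfl⟩ := hc
  rcases Int.even_or_odd a with ⟨m, rfl⟩ | ⟨m, rfl⟩ <;>
    rcases Int.even_or_odd b with ⟨n, rfl⟩ | ⟨n, rfl⟩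
  · exfalso
    have h : 2*(m+m)^2 + 2*(n+n)^2 + 4*(c'+c') = 8*(m^2+n^2+c') := by ring
    rw [h] at hd8; omega
  · -- a even, b odd : second form
    refine ⟨m, n, Or.inr ?_⟩
    have hq : (2*(m+m)^2 + 2*(2*n+1)^2 + 4*(c'+c') - 2) / 4
        = 2*m^2 + 2*n^2 + 2*n + 2*c' := by
      have h : 2*(m+m)^2 + 2*(2*n+1)^2 + 4*(c'+c') - 2
          = 4*(2*m^2 + 2*n^2 + 2*n + 2*c') := by ring
      rw [h]; omega
    rw [hq]
    ext i j
    fin_cases i <;> fin_cases j <;>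
      simp [Matrix.mul_apply, Fin.sum_univ_succ, Matrix.vecHead, Matrix.vecTail] <;> ring
  · -- a odd, b even : first form
    refine ⟨m, n, Or.inl ?_⟩
    have hq : (2*(2*m+1)^2 + 2*(n+n)^2 + 4*(c'+c') - 2) / 4
        = 2*m^2 + 2*m + 2*n^2 + 2*c' := by
      have h : 2*(2*m+1)^2 + 2*(n+n)^2 + 4*(c'+c') - 2
          = 4*(2*m^2 + 2*m + 2*n^2 + 2*c') := by ring
      rw [h]; omega
    rw [hq]
    ext i j
    fin_cases i <;> fin_cases j <;>
      simp [Matrix.mul_apply, Fin.sum_univ_succ, Matrix.vecHead, Matrix.vecTail] <;> ring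
  · exfalso
    have h : 2*(2*m+1)^2 + 2*(2*n+1)^2 + 4*(c'+c') = 8*(m^2+m+n^2+n+c') + 4 := by
      ring
    rw [h] at hd8; omega
end

section
/- Let a, b, c be integers with c even, let M be the symmetric matrix [[-2, 0, a], [0, -2, b], [a, b, c]], and set d = 2a² + 2b² + 4c (the determinant of M). Assume d ≡ 4 (mod 8). Then there exist integers s, t such that, with P = [[1, 0, s], [0, 1, t], [0, 0, 1]], the matrix PᵀMP equals [[-2, 0, 1], [0, -2, 1], [1, 1, (d-4)/4]]. -/
open Matrix

/-- Lemma 4.2, case d ≡ 4 (mod 8): the Gram matrix [[-2,0,a],[0,-2,b],[a,b,c]]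
(c even) of determinant d can be put by a base change P = [[1,0,s],[0,1,t],[0,0,1]]
into the normal form with bottom-right entry (d-4)/4. -/
theorem stmt_15 (a b c : ℤ) (hc : Even c) (d : ℤ) (hd : d = 2*a^2 + 2*b^2 + 4*c)
    (hd8 : d % 8 = 4) :
    ∃ s t : ℤ,
      (!![1, 0, s; 0, 1, t; 0, 0, 1] : Matrix (Fin 3) (Fin 3) ℤ)ᵀ *
          !![-2, 0, a; 0, -2, b; a, b, c] * !![1, 0, s; 0, 1, t; 0, 0, 1] =
        !![-2, 0, 1; 0, -2, 1; 1, 1, (d - 4) / 4] := by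
  obtain ⟨c', rfl⟩ := hc
  subst hd
  rcases Int.even_or_odd a with ⟨u, hu⟩ | ⟨u, hu⟩ <;>
    rcases Int.even_or_odd b with ⟨v, hv⟩ | ⟨v, hv⟩ <;> subst hu hv
  · exfalso
    have h : 2*(u+u)^2 + 2*(v+v)^2 + 4*(c'+c') = 8*(u^2+v^2+c') := by ring
    rw [h] at hd8; omega
  · exfalso
    have h : 2*(u+u)^2 + 2*(2*v+1)^2 + 4*(c'+c') = 8*(u^2+v^2+v+c') + 2 := by ring
    rw [h] at hd8; omega
  · exfalso
    have h : 2*(2*u+1)^2 + 2*(v+v)^2 + 4*(c'+c') = 8*(u^2+u+v^2+c') + 2 := by ring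
    rw [h] at hd8; omega
  · refine ⟨u, v, ?_⟩
    have hq : (2*(2*u+1)^2 + 2*(2*v+1)^2 + 4*(c'+c') - 4) / 4
        = 2*(u^2+u+v^2+v+c') := by
      have h : 2*(2*u+1)^2 + 2*(2*v+1)^2 + 4*(c'+c') - 4
          = 4 * (2*(u^2+u+v^2+v+c')) := by ring
      rw [h, Int.mul_ediv_cancel_left _ (by norm_num)]
    rw [hq]
    ext i j
    fin_cases i <;> fin_cases j <;>
      simp [Matrix.mul_apply, Fin.sum_univ_succ] <;> ring
end

section
/- Let a, n, k be integers with a odd and n even, satisfying a²·(2 + 8k) = 2n² + 2. Let M be the symmetric matrix [[-2, 0, 1], [0, -2, 0], [1, 0, 2k]] and let w = ((a-1)/2, n/2, a) ∈ ℤ³. Then wᵀMw = 0 and e₁ᵀMw = 1, where e₁ = (1, 0, 0). -/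
open Matrix

/-- Key computation in the proof of Theorem 1.4 for d = 2 + 8k ≡ 2 (mod 8):
for M = [[-2,0,1],[0,-2,0],[1,0,2k]] and w = ((a-1)/2, n/2, a), with a odd, n even
and a²(2+8k) = 2n²+2, one has wᵀMw = 0 and e₁ᵀMw = 1. -/
theorem stmt_17 (a n k : ℤ) (ha : Odd a) (hn : Even n)
    (heq : a^2 * (2 + 8*k) = 2*n^2 + 2) :
    (![(a - 1) / 2, n / 2, a] ⬝ᵥ
        (!![-2, 0, 1; 0, -2, 0; 1, 0, 2*k] : Matrix (Fin 3) (Fin 3) ℤ) *ᵥ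
        ![(a - 1) / 2, n / 2, a] = 0) ∧
    (![1, 0, 0] ⬝ᵥ
        (!![-2, 0, 1; 0, -2, 0; 1, 0, 2*k] : Matrix (Fin 3) (Fin 3) ℤ) *ᵥ
        ![(a - 1) / 2, n / 2, a] = 1) := by
  obtain ⟨b, hb⟩ := ha
  obtain ⟨m, hm⟩ := hn
  subst hb hm
  have h1 : (2 * b + 1 - 1) / 2 = b := by omega
  have h2 : (m + m) / 2 = m := by omega
  simp [dotProduct, mulVec, Fin.sum_univ_three, h1, h2]
  ring_nf
  ring_nf at heq
  linarith [heq]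
end

section
/- Let a, n, k be integers with a odd and n odd, satisfying a²·(4 + 8k) = 2n² + 2. Let M be the symmetric matrix [[-2, 0, 1], [0, -2, 1], [1, 1, 2k]] and let w = ((a-1)/2, (a-n)/2, a) ∈ ℤ³. Then wᵀMw = 0 and e₁ᵀMw = 1, where e₁ = (1, 0, 0). -/
open Matrix

/-- Key computation in the proof of Theorem 1.4 for d = 4 + 8k ≡ 4 (mod 8):
for M = [[-2,0,1],[0,-2,1],[1,1,2k]] and w = ((a-1)/2, (a-n)/2, a), with a, n odd
and a²(4+8k) = 2n²+2, one has wᵀMw = 0 and e₁ᵀMw = 1. -/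
theorem stmt_18 (a n k : ℤ) (ha : Odd a) (hn : Odd n)
    (heq : a^2 * (4 + 8*k) = 2*n^2 + 2) :
    (![(a - 1) / 2, (a - n) / 2, a] ⬝ᵥ
        (!![-2, 0, 1; 0, -2, 1; 1, 1, 2*k] : Matrix (Fin 3) (Fin 3) ℤ) *ᵥ
        ![(a - 1) / 2, (a - n) / 2, a] = 0) ∧
    (![1, 0, 0] ⬝ᵥ
        (!![-2, 0, 1; 0, -2, 1; 1, 1, 2*k] : Matrix (Fin 3) (Fin 3) ℤ) *ᵥ
        ![(a - 1) / 2, (a - n) / 2, a] = 1) := by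
  obtain ⟨x, hx⟩ := ha
  obtain ⟨y, hy⟩ := hn
  have h1 : (a - 1) / 2 = x := by omega
  have h2 : (a - n) / 2 = x - y := by omega
  rw [h1, h2]
  subst hx hy
  constructor <;>
  · simp [dotProduct, mulVec, Fin.sum_univ_succ]
    try nlinarith [heq]
end
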